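/- Let I be the ideal of the Eisenstein integers Z[ω] generated by 2 − ω (an element of norm 7). Then in the Cayley graph of (Z[ω], +) with connection set the six units {±1, ±ω, ±ω²} (the triangular grid), the set I is a perfect 1-code: every Eisenstein integer not in I is at distance exactly one from a unique element of I, and no two distinct elements of I are adjacent. Consequently the seven cosets of I partition the grid into seven perfect 1-codes. -/

import Mathlib

open Polynomial

/-- The Eisenstein integers `ℤ[ω]`, where `ω² + ω + 1 = 0`. -/
noncomputable abbrev Eisenstein : Type := AdjoinRoot (X ^ 2 + X + 1 : ℤ[X])

/-- The primitive cube root of unity `ω` in `ℤ[ω]`. -/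
noncomputable def eisω : Eisenstein := AdjoinRoot.root _

/-- The triangular grid: the Cayley graph on the additive group of the
Eisenstein integers with connection set the six units `{±1, ±ω, ±ω²}`. -/
noncomputable def triGrid : SimpleGraph Eisenstein :=
  SimpleGraph.fromRel (fun x y =>
    x - y ∈ ({1, -1, eisω, -eisω, eisω ^ 2, -eisω ^ 2} : Set Eisenstein))

/-- `C` is a perfect 1-code in `G`. -/
def IsPerfectOneCode {V : Type*} (G : SimpleGraph V) (C : Set V) : Prop :=
  ∀ v, ∃! c, c ∈ C ∧ (c = v ∨ G.Adj c v)

/-- The ideal of the Eisenstein integers generated by `2 − ω`. -/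
noncomputable def eisI : Ideal Eisenstein := Ideal.span {2 - eisω}

lemma eis_hω : eisω ^ 2 + eisω + 1 = 0 := by
  have h := AdjoinRoot.mk_self (f := (X ^ 2 + X + 1 : ℤ[X]))
  simpa [eisω, map_add, map_pow, AdjoinRoot.mk_X] using h

noncomputable def eisφ : Eisenstein →+* ZMod 7 :=
  AdjoinRoot.lift (Int.castRingHom (ZMod 7)) 2 (by
    simp [eval₂_add, eval₂_pow, eval₂_X, eval₂_one]
    decide)

lemma eisφ_ω : eisφ eisω = 2 := AdjoinRoot.lift_root _

lemma eis_monic : (X ^ 2 + X + 1 : ℤ[X]).Monic := by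
  monicity!

lemma eis_repr (x : Eisenstein) : ∃ a b : ℤ, x = (a : Eisenstein) + (b : Eisenstein) * eisω := by
  obtain ⟨f, rfl⟩ := AdjoinRoot.mk_surjective x
  refine ⟨(f %ₘ (X ^ 2 + X + 1)).coeff 0, (f %ₘ (X ^ 2 + X + 1)).coeff 1, ?_⟩
  conv_lhs => rw [← Polynomial.modByMonic_add_div f (X ^ 2 + X + 1 : ℤ[X])]
  rw [map_add, map_mul, AdjoinRoot.mk_self, zero_mul, add_zero]
  have hdeg : (f %ₘ (X ^ 2 + X + 1)).degree ≤ 1 := by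
    have h := Polynomial.degree_modByMonic_lt f eis_monic
    have h2 : (X ^ 2 + X + 1 : ℤ[X]).degree = 2 := by compute_degree!
    rw [h2] at h
    exact Order.le_of_lt_succ (by exact_mod_cast h)
  conv_lhs => rw [Polynomial.eq_X_add_C_of_degree_le_one hdeg]
  rw [map_add, map_mul, AdjoinRoot.mk_C, AdjoinRoot.mk_C, AdjoinRoot.mk_X]
  rw [show AdjoinRoot.root (X ^ 2 + X + 1 : ℤ[X]) = eisω from rfl]
  rw [show ∀ n : ℤ, AdjoinRoot.of (X ^ 2 + X + 1 : ℤ[X]) n = (n : Eisenstein) from fun n => map_intCast _ n,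
    show ∀ n : ℤ, AdjoinRoot.of (X ^ 2 + X + 1 : ℤ[X]) n = (n : Eisenstein) from fun n => map_intCast _ n]
  ring

lemma eis_mem_iff (x : Eisenstein) : x ∈ eisI ↔ eisφ x = 0 := by
  constructor
  · intro hx
    obtain ⟨y, rfl⟩ := Ideal.mem_span_singleton.mp hx
    have h2 : eisφ (2 - eisω) = 0 := by
      rw [map_sub, eisφ_ω, map_ofNat]; decide
    rw [map_mul, h2, zero_mul]
  · intro hx
    obtain ⟨a, b, rfl⟩ := eis_repr x
    rw [map_add, map_mul, eisφ_ω] at hx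
    have hcast : ∀ n : ℤ, eisφ (n : Eisenstein) = (n : ZMod 7) := fun n => map_intCast _ n
    rw [hcast, hcast] at hx
    have hdvd : (7 : ℤ) ∣ a + 2 * b := by
      have h0 : ((a + 2 * b : ℤ) : ZMod 7) = 0 := by push_cast; linear_combination hx
      exact_mod_cast (ZMod.intCast_zmod_eq_zero_iff_dvd _ 7).mp h0
    obtain ⟨k, hk⟩ := hdvd
    rw [eisI, Ideal.mem_span_singleton]
    refine ⟨(3 + eisω) * k - b, ?_⟩
    have hk' : (a : Eisenstein) + 2 * b = 7 * k := by exact_mod_cast congrArg (Int.cast : ℤ → Eisenstein) hk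
    linear_combination hk' + (k : Eisenstein) * eis_hω

def eisS : Set Eisenstein := {1, -1, eisω, -eisω, eisω ^ 2, -eisω ^ 2}
def eisT : Set Eisenstein := insert 0 eisS

lemma eisφ_sq : eisφ (eisω ^ 2) = 4 := by rw [map_pow, eisφ_ω]; decide

lemma eisS_neg : ∀ s ∈ eisS, -s ∈ eisS := by
  intro s hs
  simp only [eisS, Set.mem_insert_iff, Set.mem_singleton_iff] at hs ⊢
  rcases hs with rfl|rfl|rfl|rfl|rfl|rfl <;> simp

lemma eisS_phi_ne : ∀ s ∈ eisS, eisφ s ≠ 0 := by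
  intro s hs
  simp only [eisS, Set.mem_insert_iff, Set.mem_singleton_iff] at hs
  rcases hs with rfl|rfl|rfl|rfl|rfl|rfl <;>
    simp only [map_one, map_neg, eisφ_ω, eisφ_sq] <;> decide

lemma eisT_inj : ∀ s ∈ eisT, ∀ t ∈ eisT, eisφ s = eisφ t → s = t := by
  intro s hs t ht h
  simp only [eisT, eisS, Set.mem_insert_iff, Set.mem_singleton_iff] at hs ht
  rcases hs with rfl|rfl|rfl|rfl|rfl|rfl|rfl <;>
    rcases ht with rfl|rfl|rfl|rfl|rfl|rfl|rfl <;>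
    first
    | rfl
    | (exfalso
       simp only [map_zero, map_one, map_neg, eisφ_ω, eisφ_sq] at h
       exact absurd h (by decide))

noncomputable def eisg : ZMod 7 → Eisenstein :=
  ![0, 1, eisω, -eisω ^ 2, eisω ^ 2, -eisω, -1]

lemma eisg_mem : ∀ z : ZMod 7, eisg z ∈ eisT ∧ eisφ (eisg z) = z := by
  intro z
  have h5 : ![(0 : Eisenstein), 1, eisω, -eisω ^ 2, eisω ^ 2, -eisω, -1] (5 : Fin 7) = -eisω := rfl
  have h6 : ![(0 : Eisenstein), 1, eisω, -eisω ^ 2, eisω ^ 2, -eisω, -1] (6 : Fin 7) = -1 := rfl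
  fin_cases z <;>
    exact ⟨by simp [eisg, eisT, eisS, h5, h6], by simp [eisg, eisφ_ω, eisφ_sq, h5, h6]; try rfl⟩

lemma eis_key (v : Eisenstein) : ∃! c, c ∈ eisI ∧ c - v ∈ eisT := by
  obtain ⟨hmem, hφ⟩ := eisg_mem (- eisφ v)
  refine ⟨v + eisg (-eisφ v), ⟨?_, by simpa⟩, ?_⟩
  · rw [eis_mem_iff, map_add, hφ]; ring
  · rintro y ⟨hy, hyT⟩
    rw [eis_mem_iff] at hy
    have h1 : eisφ (y - v) = eisφ (v + eisg (-eisφ v) - v) := by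
      rw [map_sub, hy, add_sub_cancel_left, hφ]
      ring
    have h2 := eisT_inj _ hyT _ (by simpa) h1
    have : y = v + (y - v) := by ring
    rw [this, h2]
    ring

lemma eis_cond_iff (c v : Eisenstein) :
    (c ∈ eisI ∧ (c = v ∨ triGrid.Adj c v)) ↔ (c ∈ eisI ∧ c - v ∈ eisT) := by
  rw [triGrid, SimpleGraph.fromRel_adj]
  constructor
  · rintro ⟨hc, h | ⟨hne, h | h⟩⟩
    · exact ⟨hc, by simp [h, eisT]⟩
    · exact ⟨hc, Set.mem_insert_of_mem _ h⟩
    · refine ⟨hc, Set.mem_insert_of_mem _ ?_⟩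
      have : c - v = -(v - c) := by ring
      rw [this]
      exact eisS_neg _ h
  · rintro ⟨hc, hT⟩
    rcases Set.mem_insert_iff.mp hT with h | h
    · exact ⟨hc, Or.inl (sub_eq_zero.mp h)⟩
    · refine ⟨hc, Or.inr ⟨?_, Or.inl h⟩⟩
      intro heq
      rw [heq, sub_self] at h
      exact eisS_phi_ne _ h (map_zero _)

lemma eis_code : IsPerfectOneCode triGrid (eisI : Set Eisenstein) := by
  intro v
  obtain ⟨c, hc, hu⟩ := eis_key v
  exact ⟨c, (eis_cond_iff c v).mpr hc, fun y hy => hu y ((eis_cond_iff y v).mp hy)⟩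

lemma adj_translate (w x y : Eisenstein) : triGrid.Adj (w + x) (w + y) ↔ triGrid.Adj x y := by
  rw [triGrid, SimpleGraph.fromRel_adj, SimpleGraph.fromRel_adj]
  have h1 : w + x - (w + y) = x - y := by ring
  have h2 : w + y - (w + x) = y - x := by ring
  rw [h1, h2]
  simp only [ne_eq, add_right_inj]

lemma eis_coset (w : Eisenstein) :
    IsPerfectOneCode triGrid ((w + ·) '' (eisI : Set Eisenstein)) := by
  intro v
  obtain ⟨c, ⟨hcI, hcadj⟩, hu⟩ := eis_code (v - w)
  refine ⟨w + c, ⟨⟨c, hcI, rfl⟩, ?_⟩, ?_⟩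
  · rcases hcadj with h | h
    · left; rw [h]; ring
    · right
      have hv : v = w + (v - w) := by ring
      rw [hv]
      exact (adj_translate w c (v - w)).mpr h
  · rintro y ⟨⟨d, hdI, rfl⟩, hy⟩
    have hd : d ∈ eisI ∧ (d = v - w ∨ triGrid.Adj d (v - w)) := by
      refine ⟨hdI, ?_⟩
      rcases hy with h | h
      · left; linear_combination h
      · right
        have hv : v = w + (v - w) := by ring
        rw [hv] at h
        exact (adj_translate w d (v - w)).mp h
    rw [hu d hd]

lemma eis_card : Nat.card (Eisenstein ⧸ eisI) = 7 := by
  have h0 : ∀ a ∈ eisI, eisφ a = 0 := fun a ha => (eis_mem_iff a).mp ha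
  let q : Eisenstein ⧸ eisI →+* ZMod 7 := Ideal.Quotient.lift eisI eisφ h0
  have hbij : Function.Bijective q := by
    constructor
    · intro a b hab
      obtain ⟨x, rfl⟩ := Ideal.Quotient.mk_surjective a
      obtain ⟨y, rfl⟩ := Ideal.Quotient.mk_surjective b
      rw [Ideal.Quotient.eq, eis_mem_iff, map_sub]
      simp only [q, Ideal.Quotient.lift_mk] at hab
      rw [hab]; ring
    · intro z
      obtain ⟨hm, hz⟩ := eisg_mem z
      exact ⟨Ideal.Quotient.mk eisI (eisg z), by simp [q, Ideal.Quotient.lift_mk, hz]⟩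
  rw [Nat.card_eq_of_bijective q hbij]
  simp [Nat.card_eq_fintype_card]

theorem stmt12 :
    -- `2 − ω` has norm 7
    ((2 : ℤ) ^ 2 + (-1 : ℤ) ^ 2 - 2 * (-1) = 7) ∧
    -- the ideal `I = (2 − ω)` is a perfect 1-code in the triangular grid
    IsPerfectOneCode triGrid (eisI : Set Eisenstein) ∧
    -- hence every coset of `I` is a perfect 1-code, and there are seven cosets
    (∀ w : Eisenstein,
      IsPerfectOneCode triGrid ((w + ·) '' (eisI : Set Eisenstein))) ∧
    Nat.card (Eisenstein ⧸ eisI) = 7 := by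
  exact ⟨by norm_num, eis_code, eis_coset, eis_card⟩
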